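/- For all real $x, y > 0$, the beta function satisfies $B(x, y) \ge \frac{x^{x-1} y^{y-1}}{(x+y)^{x+y-1}}$. -/

import Mathlib

/-- The Euler beta function `B(x,y) = Γ(x)Γ(y)/Γ(x+y)`. -/
noncomputable def betaFn (x y : ℝ) : ℝ :=
  Real.Gamma x * Real.Gamma y / Real.Gamma (x + y)

open intervalIntegral Real

lemma realBeta (x y : ℝ) (hx : 0 < x) (hy : 0 < y) :
    Real.Gamma x * Real.Gamma y
      = Real.Gamma (x + y) * ∫ t in (0:ℝ)..1, t ^ (x-1) * (1-t) ^ (y-1) := by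
  have := Complex.Gamma_mul_Gamma_eq_betaIntegral (s := (x:ℂ)) (t := (y:ℂ))
    (by simpa using hx) (by simpa using hy)
  have hbeta : Complex.betaIntegral x y
      = ((∫ t in (0:ℝ)..1, t ^ (x-1) * (1-t) ^ (y-1) : ℝ) : ℂ) := by
    rw [Complex.betaIntegral, ← intervalIntegral.integral_ofReal]
    refine intervalIntegral.integral_congr fun t ht => ?_
    rw [Set.uIcc_of_le zero_le_one] at ht
    rw [Complex.ofReal_mul, Complex.ofReal_cpow ht.1, Complex.ofReal_cpow (by linarith [ht.2] : (0:ℝ) ≤ 1 - t)]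
    push_cast
    ring
  apply_fun Complex.re at this
  rw [hbeta] at this
  simpa [Complex.Gamma_ofReal, ← Complex.ofReal_mul, ← Complex.ofReal_add] using this

lemma keyIntegral (x y : ℝ) (hx : 0 < x) (hy : 0 < y) :
    x ^ x * y ^ y / ((x + y) ^ (x + y) * (x + y + 1))
      ≤ ∫ t in (0:ℝ)..1, t ^ x * (1 - t) ^ y := by
  have hs : 0 < x + y := by linarith
  set t0 : ℝ := x / (x + y) with ht0def
  have ht0 : 0 < t0 := div_pos hx hs
  have ht0' : t0 < 1 := (div_lt_one hs).2 (by linarith)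
  have h1t0 : 0 < 1 - t0 := by linarith
  set M : ℝ := t0 ^ x * (1 - t0) ^ y with hMdef
  have hM : 0 < M := mul_pos (rpow_pos_of_pos ht0 _) (rpow_pos_of_pos h1t0 _)
  have hcont : Continuous fun t : ℝ => t ^ x * (1 - t) ^ y := by
    apply Continuous.mul
    · exact continuous_iff_continuousAt.2 fun t =>
        Real.continuousAt_rpow_const t x (Or.inr hx.le)
    · exact (continuous_const.sub continuous_id).rpow_const fun t => Or.inr hy.le
  -- pointwise bounds
  have hleft : ∀ t ∈ Set.Icc (0:ℝ) t0,
      M / t0 ^ (x + y) * t ^ (x + y) ≤ t ^ x * (1 - t) ^ y := by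
    rintro t ⟨h0, h1⟩
    rcases eq_or_lt_of_le h0 with rfl | h0
    · rw [Real.zero_rpow hs.ne', Real.zero_rpow hx.ne']
      simp
    · have hbase : (1 - t0) / t0 * t ≤ 1 - t := by
        rw [div_mul_eq_mul_div, div_le_iff₀ ht0]
        nlinarith
      have hbase0 : 0 ≤ (1 - t0) / t0 * t :=
        mul_nonneg (div_nonneg h1t0.le ht0.le) h0.le
      have heq : M / t0 ^ (x + y) * t ^ (x + y)
          = t ^ x * ((1 - t0) / t0 * t) ^ y := by
        rw [Real.mul_rpow (by positivity) h0.le, Real.div_rpow h1t0.le ht0.le,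
          Real.rpow_add ht0, Real.rpow_add h0, hMdef]
        field_simp
      rw [heq]
      exact mul_le_mul_of_nonneg_left
        (Real.rpow_le_rpow hbase0 hbase hy.le) (Real.rpow_nonneg h0.le _)
  have hright : ∀ t ∈ Set.Icc t0 (1:ℝ),
      M / (1 - t0) ^ (x + y) * (1 - t) ^ (x + y) ≤ t ^ x * (1 - t) ^ y := by
    rintro t ⟨h0, h1⟩
    have ht : 0 < t := ht0.trans_le h0
    rcases eq_or_lt_of_le h1 with rfl | h1
    · rw [sub_self, Real.zero_rpow hs.ne', Real.zero_rpow hy.ne']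
      simp
    · have h1t : 0 < 1 - t := by linarith
      have hbase : t0 / (1 - t0) * (1 - t) ≤ t := by
        rw [div_mul_eq_mul_div, div_le_iff₀ h1t0]
        nlinarith
      have hbase0 : 0 ≤ t0 / (1 - t0) * (1 - t) :=
        mul_nonneg (div_nonneg ht0.le h1t0.le) h1t.le
      have heq : M / (1 - t0) ^ (x + y) * (1 - t) ^ (x + y)
          = (t0 / (1 - t0) * (1 - t)) ^ x * (1 - t) ^ y := by
        rw [Real.mul_rpow (by positivity) h1t.le, Real.div_rpow ht0.le h1t0.le,
          Real.rpow_add h1t0, Real.rpow_add h1t, hMdef]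
        field_simp
      rw [heq]
      exact mul_le_mul_of_nonneg_right
        (Real.rpow_le_rpow hbase0 hbase hx.le) (Real.rpow_nonneg h1t.le _)
  -- the two lower-bound integrals
  have hIleft : ∫ t in (0:ℝ)..t0, M / t0 ^ (x + y) * t ^ (x + y)
      = M * t0 / (x + y + 1) := by
    rw [intervalIntegral.integral_const_mul, integral_rpow (Or.inl (by linarith)),
      Real.zero_rpow (by positivity : x + y + 1 ≠ 0),
      Real.rpow_add_one ht0.ne']
    field_simp
    ring
  have hIright : ∫ t in t0..(1:ℝ), M / (1 - t0) ^ (x + y) * (1 - t) ^ (x + y)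
      = M * (1 - t0) / (x + y + 1) := by
    rw [intervalIntegral.integral_const_mul]
    have : ∫ t in t0..(1:ℝ), (1 - t) ^ (x + y)
        = ∫ u in (0:ℝ)..(1 - t0), u ^ (x + y) := by
      simpa using intervalIntegral.integral_comp_sub_left
        (a := t0) (b := 1) (fun u : ℝ => u ^ (x + y)) 1
    rw [this, integral_rpow (Or.inl (by linarith)),
      Real.zero_rpow (by positivity : x + y + 1 ≠ 0),
      Real.rpow_add_one h1t0.ne']
    field_simp
    ring
  have hintf : ∀ a b : ℝ, IntervalIntegrable (fun t : ℝ => t ^ x * (1 - t) ^ y)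
      MeasureTheory.volume a b := fun a b => hcont.intervalIntegrable a b
  have hsplit : (∫ t in (0:ℝ)..1, t ^ x * (1 - t) ^ y)
      = (∫ t in (0:ℝ)..t0, t ^ x * (1 - t) ^ y)
        + ∫ t in t0..(1:ℝ), t ^ x * (1 - t) ^ y :=
    (intervalIntegral.integral_add_adjacent_intervals (hintf 0 t0) (hintf t0 1)).symm
  have hmono1 : (∫ t in (0:ℝ)..t0, M / t0 ^ (x + y) * t ^ (x + y))
      ≤ ∫ t in (0:ℝ)..t0, t ^ x * (1 - t) ^ y := by
    refine intervalIntegral.integral_mono_on ht0.le ?_ (hintf 0 t0) hleft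
    exact ((continuous_const.mul (continuous_iff_continuousAt.2 fun t =>
      Real.continuousAt_rpow_const t (x + y) (Or.inr hs.le))).intervalIntegrable 0 t0)
  have hmono2 : (∫ t in t0..(1:ℝ), M / (1 - t0) ^ (x + y) * (1 - t) ^ (x + y))
      ≤ ∫ t in t0..(1:ℝ), t ^ x * (1 - t) ^ y := by
    refine intervalIntegral.integral_mono_on ht0'.le ?_ (hintf t0 1) hright
    exact ((continuous_const.mul ((continuous_const.sub continuous_id).rpow_const fun t =>
      Or.inr hs.le)).intervalIntegrable t0 1)
  have hMval : M = x ^ x * y ^ y / (x + y) ^ (x + y) := by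
    have h1 : 1 - t0 = y / (x + y) := by
      field_simp [ht0def]
      rw [ht0def, sub_mul, div_mul_cancel₀ _ hs.ne']; ring
    rw [hMdef, h1, ht0def, Real.div_rpow hx.le hs.le, Real.div_rpow hy.le hs.le,
      Real.rpow_add hs]
    field_simp
  calc x ^ x * y ^ y / ((x + y) ^ (x + y) * (x + y + 1))
      = M * t0 / (x + y + 1) + M * (1 - t0) / (x + y + 1) := by
        rw [hMval]; field_simp; ring
    _ ≤ (∫ t in (0:ℝ)..t0, t ^ x * (1 - t) ^ y)
        + ∫ t in t0..(1:ℝ), t ^ x * (1 - t) ^ y := by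
        rw [← hIleft, ← hIright]; exact add_le_add hmono1 hmono2
    _ = ∫ t in (0:ℝ)..1, t ^ x * (1 - t) ^ y := hsplit.symm

/-- Grenié–Molteni: for all `x, y > 0`,
`B(x,y) ≥ x^{x-1} y^{y-1} / (x+y)^{x+y-1}`. -/
theorem betaFn_ge (x y : ℝ) (hx : 0 < x) (hy : 0 < y) :
    betaFn x y ≥ x ^ (x - 1) * y ^ (y - 1) / (x + y) ^ (x + y - 1) := by
  have hs : 0 < x + y := by linarith
  have hB := realBeta (x + 1) (y + 1) (by linarith) (by linarith)
  simp only [add_sub_cancel_right] at hB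
  rw [Real.Gamma_add_one hx.ne', Real.Gamma_add_one hy.ne',
    show x + 1 + (y + 1) = (x + y + 1) + 1 by ring,
    Real.Gamma_add_one (by positivity), Real.Gamma_add_one hs.ne'] at hB
  set I : ℝ := ∫ t in (0:ℝ)..1, t ^ x * (1 - t) ^ y with hIdef
  have hGxy : 0 < Real.Gamma (x + y) := Real.Gamma_pos_of_pos hs
  have hbeta : betaFn x y = (x + y) * (x + y + 1) / (x * y) * I := by
    rw [betaFn]
    field_simp
    linear_combination hB
  have hrhs : (x + y) * (x + y + 1) / (x * y)
        * (x ^ x * y ^ y / ((x + y) ^ (x + y) * (x + y + 1)))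
      = x ^ (x - 1) * y ^ (y - 1) / (x + y) ^ (x + y - 1) := by
    rw [Real.rpow_sub hx, Real.rpow_sub hy, Real.rpow_sub hs, Real.rpow_one,
      Real.rpow_one, Real.rpow_one]
    have h1 : (0:ℝ) < x ^ x := rpow_pos_of_pos hx _
    have h2 : (0:ℝ) < y ^ y := rpow_pos_of_pos hy _
    have h3 : (0:ℝ) < (x + y) ^ (x + y) := rpow_pos_of_pos hs _
    field_simp
  rw [hbeta, ← hrhs]
  exact mul_le_mul_of_nonneg_left (keyIntegral x y hx hy) (by positivity)
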